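/- Let T be a tree on n > 2 vertices with distance squared matrix Δ, and let t be the number of vertices of degree 2 in T. Then i_0(Δ) = t − 1 if t ≥ 2, and i_0(Δ) = 0 if t = 0 or t = 1. -/

import Mathlib

open Matrix

/-- The distance squared matrix of a graph. -/
noncomputable def distSqMatrix {V : Type*} [Fintype V] (G : SimpleGraph V) :
    Matrix V V ℝ := Matrix.of fun i j => ((G.dist i j : ℝ)) ^ 2

/-- number of positive eigenvalues (with multiplicity) of a real symmetric matrix -/
noncomputable def iPos {V : Type*} [Fintype V] [DecidableEq V] (M : Matrix V V ℝ) : ℕ :=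
  if h : M.IsHermitian then (Finset.univ.filter fun i => 0 < h.eigenvalues i).card else 0

/-- number of negative eigenvalues (with multiplicity) of a real symmetric matrix -/
noncomputable def iNeg {V : Type*} [Fintype V] [DecidableEq V] (M : Matrix V V ℝ) : ℕ :=
  if h : M.IsHermitian then (Finset.univ.filter fun i => h.eigenvalues i < 0).card else 0

/-- multiplicity of 0 as an eigenvalue of a real symmetric matrix -/
noncomputable def iZero {V : Type*} [Fintype V] [DecidableEq V] (M : Matrix V V ℝ) : ℕ :=
  if h : M.IsHermitian then (Finset.univ.filter fun i => h.eigenvalues i = 0).card else 0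

open Finset

section TreeProof
set_option linter.unusedSectionVars false
set_option maxHeartbeats 1000000
variable {n : ℕ} {T : SimpleGraph (Fin n)} [DecidableRel T.Adj]

lemma path_length_eq_dist (hT : T.IsTree) {a b : Fin n} (p : T.Walk a b) (hp : p.IsPath) :
    p.length = T.dist a b := by
  obtain ⟨q, hq, hlen⟩ := hT.isConnected.exists_path_of_dist a b
  rw [(hT.existsUnique_path a b).unique hp hq, hlen]

lemma tree_nbr (hT : T.IsTree) {i j : Fin n} (hij : i ≠ j) :
    ∃ u ∈ T.neighborFinset j, T.dist i u + 1 = T.dist i j ∧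
      ∀ k ∈ T.neighborFinset j, k ≠ u → T.dist i k = T.dist i j + 1 := by
  obtain ⟨p, hp, hplen⟩ := hT.isConnected.exists_path_of_dist j i
  obtain ⟨u, hadj, q, rfl⟩ := SimpleGraph.Walk.exists_eq_cons_of_ne (hij.symm) p
  have hp' := hp
  rw [SimpleGraph.Walk.cons_isPath_iff] at hp
  obtain ⟨hq, hjq⟩ := hp
  have hqlen : q.length = T.dist u i := path_length_eq_dist hT q hq
  have hdji : T.dist j i = q.length + 1 := by
    rw [← hplen]; simp [SimpleGraph.Walk.length_cons]
  refine ⟨u, (T.mem_neighborFinset j u).2 hadj, ?_, ?_⟩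
  · rw [SimpleGraph.dist_comm (u := i), SimpleGraph.dist_comm (u := i), hdji, hqlen]
  · intro k hk hku
    have hadjk : T.Adj k j := ((T.mem_neighborFinset j k).1 hk).symm
    have hknot : k ∉ (SimpleGraph.Walk.cons hadj q).support := by
      intro hmem
      have hdjk : T.dist j k = 1 := SimpleGraph.dist_eq_one_iff_adj.2 hadjk.symm
      have htu : ((SimpleGraph.Walk.cons hadj q).takeUntil k hmem).length = 1 := by
        rw [path_length_eq_dist hT _ (hp'.takeUntil hmem), hdjk]
      have h2 : (SimpleGraph.Walk.cons hadj q).getVert 1 = u := by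
        simp [SimpleGraph.Walk.getVert_cons_succ, SimpleGraph.Walk.getVert_zero]
      have h3 : (SimpleGraph.Walk.cons hadj q).getVert 1 = k := by
        conv_lhs => rw [← (SimpleGraph.Walk.cons hadj q).take_spec hmem]
        rw [SimpleGraph.Walk.getVert_append, htu]
        simp
      exact hku (h2 ▸ h3.symm ▸ rfl)
    have hpath : (SimpleGraph.Walk.cons hadjk (SimpleGraph.Walk.cons hadj q)).IsPath :=
      (SimpleGraph.Walk.cons_isPath_iff _ _).2 ⟨hp', hknot⟩
    have := path_length_eq_dist hT _ hpath
    rw [SimpleGraph.Walk.length_cons] at this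
    rw [SimpleGraph.dist_comm (u := i), ← this, SimpleGraph.dist_comm (u := i) (v := j), hdji]
    simp


lemma nbr_sum (hT : T.IsTree) {i j : Fin n} (hij : i ≠ j) (g : ℕ → ℝ) :
    ∃ m : ℕ, m + 1 = T.dist i j ∧
      ∑ k ∈ T.neighborFinset j, g (T.dist i k)
        = g m + ((T.degree j : ℝ) - 1) * g (T.dist i j + 1) := by
  obtain ⟨u, hu, hdu, hrest⟩ := tree_nbr hT hij
  refine ⟨T.dist i u, hdu, ?_⟩
  rw [← Finset.add_sum_erase _ _ hu]
  have hcong : ∀ k ∈ (T.neighborFinset j).erase u, g (T.dist i k) = g (T.dist i j + 1) :=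
    fun k hk => by rw [hrest k (Finset.mem_of_mem_erase hk) (Finset.ne_of_mem_erase hk)]
  rw [Finset.sum_congr rfl hcong, Finset.sum_const, Finset.card_erase_of_mem hu, nsmul_eq_mul]
  have hdeg : 1 ≤ (T.neighborFinset j).card := Finset.card_pos.2 ⟨u, hu⟩
  congr 2
  rw [Nat.cast_sub hdeg, SimpleGraph.card_neighborFinset_eq_degree]
  norm_num

lemma dist_nbr {i k : Fin n} (hk : k ∈ T.neighborFinset i) : T.dist i k = 1 :=
  SimpleGraph.dist_eq_one_iff_adj.2 ((T.mem_neighborFinset i k).1 hk)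

lemma sum_nbr_swap (F : Fin n → ℝ) :
    ∑ j, ∑ k ∈ T.neighborFinset j, F k = ∑ k, (T.degree k : ℝ) * F k := by
  have h1 : ∀ j, ∑ k ∈ T.neighborFinset j, F k = ∑ k, if T.Adj j k then F k else 0 := by
    intro j
    rw [SimpleGraph.neighborFinset_eq_filter, Finset.sum_filter]
  simp_rw [h1]
  rw [Finset.sum_comm]
  refine Finset.sum_congr rfl fun k _ => ?_
  rw [T.degree_eq_sum_if_adj (R := ℝ), Finset.sum_mul]
  refine Finset.sum_congr rfl fun j _ => ?_
  by_cases h : T.Adj j k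
  · rw [if_pos h, if_pos h.symm, one_mul]
  · rw [if_neg h, if_neg (fun hh => h hh.symm), zero_mul]

lemma handshake (hT : T.IsTree) (hn : 0 < n) :
    ∑ i, (T.degree i : ℝ) = 2 * ((n : ℝ) - 1) := by
  have h1 := T.sum_degrees_eq_twice_card_edges
  have h2 := hT.card_edgeFinset
  rw [Fintype.card_fin] at h2
  have h3 : ∑ i, T.degree i = 2 * (n - 1) := by omega
  have h4 := congrArg (Nat.cast : ℕ → ℝ) h3
  push_cast [Nat.cast_sub hn] at h4
  simpa using h4

lemma P1 (hT : T.IsTree) (hn : 0 < n) (i : Fin n) :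
    ∑ j, (T.degree j : ℝ) * (T.dist i j : ℝ) = 2 * (∑ j, (T.dist i j : ℝ)) - ((n:ℝ) - 1) := by
  have hswap := sum_nbr_swap (T := T) (fun k => ((T.dist i k : ℝ))^2)
  have hself : ∑ k ∈ T.neighborFinset i, ((T.dist i k : ℝ))^2 = (T.degree i : ℝ) := by
    have hone : ∀ k ∈ T.neighborFinset i, ((T.dist i k : ℝ))^2 = 1 := fun k hk => by
      rw [dist_nbr hk]; norm_num
    rw [Finset.sum_congr rfl hone, Finset.sum_const, nsmul_eq_mul, mul_one,
      SimpleGraph.card_neighborFinset_eq_degree]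
  have key : ∀ j ∈ univ.erase i, ∑ k ∈ T.neighborFinset j, ((T.dist i k:ℝ))^2
      = (T.degree j : ℝ)*((T.dist i j:ℝ))^2 + 2*(T.degree j:ℝ)*(T.dist i j:ℝ)
        + (T.degree j:ℝ) - 4*(T.dist i j:ℝ) := by
    intro j hj
    obtain ⟨m, hm, hsum⟩ := nbr_sum hT (fun h => (Finset.ne_of_mem_erase hj) h.symm)
      (fun d => ((d:ℝ))^2)
    rw [hsum]
    have hm' : (m:ℝ) = (T.dist i j:ℝ) - 1 := by
      have := congrArg (Nat.cast : ℕ → ℝ) hm; push_cast at this; linarith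
    push_cast
    rw [hm']; ring
  rw [← Finset.add_sum_erase _ _ (Finset.mem_univ i), hself, Finset.sum_congr rfl key] at hswap
  have e1 : ∑ j ∈ univ.erase i, ((T.degree j : ℝ)*((T.dist i j:ℝ))^2 + 2*(T.degree j:ℝ)*(T.dist i j:ℝ) + (T.degree j:ℝ) - 4*(T.dist i j:ℝ))
      = (∑ j, (T.degree j:ℝ)*((T.dist i j:ℝ))^2) + 2*(∑ j, (T.degree j:ℝ)*(T.dist i j:ℝ))
        + ((2*((n:ℝ)-1)) - (T.degree i:ℝ)) - 4*(∑ j, (T.dist i j:ℝ)) := by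
    rw [Finset.sum_sub_distrib, Finset.sum_add_distrib, Finset.sum_add_distrib]
    rw [Finset.sum_erase_eq_sub (Finset.mem_univ i), Finset.sum_erase_eq_sub (Finset.mem_univ i),
        Finset.sum_erase_eq_sub (Finset.mem_univ i), Finset.sum_erase_eq_sub (Finset.mem_univ i)]
    rw [SimpleGraph.dist_self, handshake hT hn]
    push_cast
    simp_rw [mul_assoc]
    rw [← Finset.mul_sum, ← Finset.mul_sum]
    ring_nf
  rw [e1] at hswap
  have hB : (∑ k, (T.degree k:ℝ) * ((T.dist i k:ℝ))^2) = ∑ j, (T.degree j:ℝ)*((T.dist i j:ℝ))^2 := rfl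
  linarith [hswap]


omit [DecidableRel T.Adj] in
lemma card_erase_real (hn : 0 < n) (i : Fin n) :
    ∑ _j ∈ (univ : Finset (Fin n)).erase i, (1:ℝ) = (n:ℝ) - 1 := by
  rw [Finset.sum_const, Finset.card_erase_of_mem (Finset.mem_univ i), nsmul_eq_mul, mul_one,
    Finset.card_univ, Fintype.card_fin, Nat.cast_sub hn, Nat.cast_one]

lemma P2 (hT : T.IsTree) (hn : 0 < n) (i : Fin n) :
    ∑ j, (T.degree j : ℝ) * ((T.dist i j : ℝ))^2
      = 2 * (∑ j, ((T.dist i j : ℝ))^2) - 2 * (∑ j, (T.dist i j : ℝ)) + ((n:ℝ) - 1) := by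
  have hswap := sum_nbr_swap (T := T) (fun k => ((T.dist i k : ℝ))^3)
  have hself : ∑ k ∈ T.neighborFinset i, ((T.dist i k : ℝ))^3 = (T.degree i : ℝ) := by
    have hone : ∀ k ∈ T.neighborFinset i, ((T.dist i k : ℝ))^3 = 1 := fun k hk => by
      rw [dist_nbr hk]; norm_num
    rw [Finset.sum_congr rfl hone, Finset.sum_const, nsmul_eq_mul, mul_one,
      SimpleGraph.card_neighborFinset_eq_degree]
  have key : ∀ j ∈ univ.erase i, ∑ k ∈ T.neighborFinset j, ((T.dist i k:ℝ))^3
      = (T.degree j : ℝ)*((T.dist i j:ℝ))^3 + 3*((T.degree j:ℝ)*((T.dist i j:ℝ))^2)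
        + 3*((T.degree j:ℝ)*(T.dist i j:ℝ)) + (T.degree j:ℝ) - 6*((T.dist i j:ℝ))^2 - 2 := by
    intro j hj
    obtain ⟨m, hm, hsum⟩ := nbr_sum hT (fun h => (Finset.ne_of_mem_erase hj) h.symm)
      (fun d => ((d:ℝ))^3)
    rw [hsum]
    have hm' : (m:ℝ) = (T.dist i j:ℝ) - 1 := by
      have := congrArg (Nat.cast : ℕ → ℝ) hm; push_cast at this; linarith
    push_cast
    rw [hm']; ring
  rw [← Finset.add_sum_erase _ _ (Finset.mem_univ i), hself, Finset.sum_congr rfl key] at hswap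
  have e1 : ∑ j ∈ univ.erase i, ((T.degree j : ℝ)*((T.dist i j:ℝ))^3 + 3*((T.degree j:ℝ)*((T.dist i j:ℝ))^2)
        + 3*((T.degree j:ℝ)*(T.dist i j:ℝ)) + (T.degree j:ℝ) - 6*((T.dist i j:ℝ))^2 - 2)
      = (∑ j, (T.degree j:ℝ)*((T.dist i j:ℝ))^3) + 3*(∑ j, (T.degree j:ℝ)*((T.dist i j:ℝ))^2)
        + 3*(∑ j, (T.degree j:ℝ)*(T.dist i j:ℝ)) + ((2*((n:ℝ)-1)) - (T.degree i:ℝ))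
        - 6*(∑ j, ((T.dist i j:ℝ))^2) - 2*((n:ℝ)-1) := by
    rw [Finset.sum_sub_distrib, Finset.sum_sub_distrib, Finset.sum_add_distrib,
      Finset.sum_add_distrib, Finset.sum_add_distrib,
      Finset.sum_erase_eq_sub (Finset.mem_univ i), Finset.sum_erase_eq_sub (Finset.mem_univ i),
      Finset.sum_erase_eq_sub (Finset.mem_univ i), Finset.sum_erase_eq_sub (Finset.mem_univ i),
      Finset.sum_erase_eq_sub (Finset.mem_univ i)]
    have hc : ∑ _j ∈ (univ : Finset (Fin n)).erase i, (2:ℝ) = 2*((n:ℝ)-1) := by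
      have := card_erase_real hn i
      calc ∑ _j ∈ (univ : Finset (Fin n)).erase i, (2:ℝ)
          = 2 * ∑ _j ∈ (univ : Finset (Fin n)).erase i, (1:ℝ) := by
            rw [Finset.mul_sum]; norm_num
        _ = 2*((n:ℝ)-1) := by rw [this]
    rw [hc, SimpleGraph.dist_self, handshake hT hn]
    push_cast
    rw [← Finset.mul_sum, ← Finset.mul_sum, ← Finset.mul_sum]
    ring
  rw [e1] at hswap
  have hP1 := P1 hT hn i
  linarith [hswap]


lemma nbr_sq (hT : T.IsTree) {i j : Fin n} (hij : i ≠ j) :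
    ∑ k ∈ T.neighborFinset j, ((T.dist i k:ℝ))^2
      = (T.degree j : ℝ)*((T.dist i j:ℝ))^2 + 2*(T.degree j:ℝ)*(T.dist i j:ℝ)
        + (T.degree j:ℝ) - 4*(T.dist i j:ℝ) := by
  obtain ⟨m, hm, hsum⟩ := nbr_sum hT hij (fun d => ((d:ℝ))^2)
  rw [hsum]
  have hm' : (m:ℝ) = (T.dist i j:ℝ) - 1 := by
    have := congrArg (Nat.cast : ℕ → ℝ) hm; push_cast at this; linarith
  push_cast
  rw [hm']; ring

lemma nbr_lin (hT : T.IsTree) {i j : Fin n} (hij : i ≠ j) :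
    ∑ k ∈ T.neighborFinset j, ((T.dist i k:ℝ))
      = (T.degree j : ℝ)*(T.dist i j:ℝ) + (T.degree j:ℝ) - 2 := by
  obtain ⟨m, hm, hsum⟩ := nbr_sum hT hij (fun d => ((d:ℝ)))
  rw [hsum]
  have hm' : (m:ℝ) = (T.dist i j:ℝ) - 1 := by
    have := congrArg (Nat.cast : ℕ → ℝ) hm; push_cast at this; linarith
  push_cast
  rw [hm']; ring

lemma nbr_self_sq (i : Fin n) :
    ∑ k ∈ T.neighborFinset i, ((T.dist i k : ℝ))^2 = (T.degree i : ℝ) := by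
  have hone : ∀ k ∈ T.neighborFinset i, ((T.dist i k : ℝ))^2 = 1 := fun k hk => by
    rw [dist_nbr hk]; norm_num
  rw [Finset.sum_congr rfl hone, Finset.sum_const, nsmul_eq_mul, mul_one,
    SimpleGraph.card_neighborFinset_eq_degree]

lemma nbr_self_lin (i : Fin n) :
    ∑ k ∈ T.neighborFinset i, ((T.dist i k : ℝ)) = (T.degree i : ℝ) := by
  have hone : ∀ k ∈ T.neighborFinset i, ((T.dist i k : ℝ)) = 1 := fun k hk => by
    rw [dist_nbr hk]; norm_num
  rw [Finset.sum_congr rfl hone, Finset.sum_const, nsmul_eq_mul, mul_one,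
    SimpleGraph.card_neighborFinset_eq_degree]

lemma adj_filter_sum (j : Fin n) (F : Fin n → ℝ) :
    ∑ k, (if T.Adj k j then F k else 0) = ∑ k ∈ T.neighborFinset j, F k := by
  rw [SimpleGraph.neighborFinset_eq_filter, Finset.sum_filter]
  exact Finset.sum_congr rfl fun k _ => if_congr (T.adj_comm k j) rfl rfl

lemma C1 (hT : T.IsTree) :
    distSqMatrix T * T.lapMatrix ℝ
      = Matrix.of (fun i j => (4 - 2*(T.degree j:ℝ)) * (T.dist i j:ℝ) - (T.degree j:ℝ)) := by
  ext i j
  rw [Matrix.mul_apply]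
  simp only [distSqMatrix, Matrix.of_apply]
  have hL : ∀ k, T.lapMatrix ℝ k j
      = (if k = j then (T.degree j:ℝ) else 0) - (if T.Adj k j then 1 else 0) := by
    intro k
    rw [SimpleGraph.lapMatrix, Matrix.sub_apply, SimpleGraph.degMatrix, Matrix.diagonal_apply]
    by_cases h : k = j
    · subst h; simp
    · simp [h]
  simp_rw [hL, mul_sub, Finset.sum_sub_distrib, mul_ite, mul_one, mul_zero]
  rw [Finset.sum_ite_eq' univ j (fun k => ((T.dist i k:ℝ))^2 * (T.degree j:ℝ)),
    if_pos (Finset.mem_univ j), adj_filter_sum j (fun k => ((T.dist i k:ℝ))^2)]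
  by_cases hij : i = j
  · subst hij
    rw [nbr_self_sq, SimpleGraph.dist_self]
    push_cast; ring
  · rw [nbr_sq hT hij]
    ring

lemma C2 (hT : T.IsTree) :
    T.lapMatrix ℝ * (distSqMatrix T * T.lapMatrix ℝ)
      = Matrix.of (fun i j => 2*(2-(T.degree i:ℝ))*(2-(T.degree j:ℝ))
          + (if i = j then 4*((T.degree i:ℝ) - 2) else 0)) := by
  rw [C1 hT]
  ext i j
  rw [Matrix.mul_apply]
  simp only [Matrix.of_apply]
  have hL : ∀ k, T.lapMatrix ℝ i k
      = (if i = k then (T.degree i:ℝ) else 0) - (if T.Adj i k then 1 else 0) := by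
    intro k
    rw [SimpleGraph.lapMatrix, Matrix.sub_apply, SimpleGraph.degMatrix, Matrix.diagonal_apply]
    rfl
  simp_rw [hL, sub_mul, Finset.sum_sub_distrib, ite_mul, zero_mul, one_mul]
  rw [Finset.sum_ite_eq univ i _, if_pos (Finset.mem_univ i)]
  have hsum2 : (∑ k, if T.Adj i k then (4*(T.dist k j:ℝ) - 2*(T.degree j:ℝ)*(T.dist k j:ℝ) - (T.degree j:ℝ)) else 0)
      = ∑ k ∈ T.neighborFinset i, (4*(T.dist k j:ℝ) - 2*(T.degree j:ℝ)*(T.dist k j:ℝ) - (T.degree j:ℝ)) := by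
    rw [SimpleGraph.neighborFinset_eq_filter, Finset.sum_filter]
  rw [hsum2]
  rw [Finset.sum_sub_distrib, Finset.sum_sub_distrib, Finset.sum_const,
    SimpleGraph.card_neighborFinset_eq_degree, nsmul_eq_mul, ← Finset.mul_sum, ← Finset.mul_sum]
  have hdc : ∀ k : Fin n, (T.dist k j : ℝ) = (T.dist j k : ℝ) := fun k => by
    rw [SimpleGraph.dist_comm]
  simp_rw [hdc]
  by_cases hij : i = j
  · subst hij
    rw [nbr_self_lin, SimpleGraph.dist_self, if_pos rfl]
    push_cast; ring
  · rw [nbr_lin hT (fun h => hij h.symm), if_neg hij, SimpleGraph.dist_comm (u := j)]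
    ring


lemma tau_sum (hT : T.IsTree) (hn : 0 < n) : ∑ i, (2 - (T.degree i:ℝ)) = 2 := by
  rw [Finset.sum_sub_distrib, handshake hT hn, Finset.sum_const, card_univ, Fintype.card_fin,
    nsmul_eq_mul]
  ring

lemma DeltaTau (hT : T.IsTree) (hn : 0 < n) :
    distSqMatrix T *ᵥ (fun j => 2 - (T.degree j:ℝ))
      = fun i => 2*(∑ j, (T.dist i j:ℝ)) - ((n:ℝ)-1) := by
  funext i
  simp only [Matrix.mulVec, dotProduct, distSqMatrix, Matrix.of_apply]
  have h1 : ∀ j, ((T.dist i j:ℝ))^2 * (2 - (T.degree j:ℝ))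
      = 2*((T.dist i j:ℝ))^2 - (T.degree j:ℝ)*((T.dist i j:ℝ))^2 := fun j => by ring
  simp_rw [h1]
  rw [Finset.sum_sub_distrib, ← Finset.mul_sum, P2 hT hn i]
  ring

lemma S4 (hT : T.IsTree) (hn : 0 < n) (i : Fin n) :
    ∑ k ∈ T.neighborFinset i, (∑ j, (T.dist k j:ℝ))
      = (T.degree i:ℝ) * (∑ j, (T.dist i j:ℝ)) + ((T.degree i:ℝ) - 2)*((n:ℝ)-1)
        + (T.degree i:ℝ) := by
  rw [Finset.sum_comm]
  have inner : ∀ j ∈ (univ : Finset (Fin n)).erase i, ∑ k ∈ T.neighborFinset i, (T.dist k j:ℝ)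
      = (T.degree i:ℝ)*(T.dist i j:ℝ) + (T.degree i:ℝ) - 2 := by
    intro j hj
    have hji : j ≠ i := Finset.ne_of_mem_erase hj
    have hcomm : ∀ k : Fin n, (T.dist k j:ℝ) = (T.dist j k:ℝ) := fun k => by
      rw [SimpleGraph.dist_comm]
    simp_rw [hcomm]
    rw [nbr_lin hT hji, SimpleGraph.dist_comm (u := j)]
  rw [← Finset.add_sum_erase _ _ (Finset.mem_univ i), Finset.sum_congr rfl inner]
  have hterm : ∑ k ∈ T.neighborFinset i, (T.dist k i:ℝ) = (T.degree i:ℝ) := by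
    have hcomm : ∀ k : Fin n, (T.dist k i:ℝ) = (T.dist i k:ℝ) := fun k => by
      rw [SimpleGraph.dist_comm]
    simp_rw [hcomm]
    exact nbr_self_lin i
  rw [hterm]
  have e2 : ∑ j ∈ (univ : Finset (Fin n)).erase i,
        ((T.degree i:ℝ)*(T.dist i j:ℝ) + (T.degree i:ℝ) - 2)
      = (T.degree i:ℝ)*(∑ j, (T.dist i j:ℝ)) + ((n:ℝ)-1)*((T.degree i:ℝ) - 2) := by
    rw [Finset.sum_sub_distrib, Finset.sum_add_distrib, ← Finset.mul_sum,
      Finset.sum_erase_eq_sub (Finset.mem_univ i), SimpleGraph.dist_self]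
    have hc1 : ∑ _j ∈ (univ : Finset (Fin n)).erase i, (T.degree i:ℝ)
        = ((n:ℝ)-1) * (T.degree i:ℝ) := by
      rw [Finset.sum_const, Finset.card_erase_of_mem (Finset.mem_univ i), nsmul_eq_mul,
        Finset.card_univ, Fintype.card_fin, Nat.cast_sub hn, Nat.cast_one]
    have hc2 : ∑ _j ∈ (univ : Finset (Fin n)).erase i, (2:ℝ) = ((n:ℝ)-1) * 2 := by
      rw [Finset.sum_const, Finset.card_erase_of_mem (Finset.mem_univ i), nsmul_eq_mul,
        Finset.card_univ, Fintype.card_fin, Nat.cast_sub hn, Nat.cast_one]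
    rw [hc1, hc2]
    push_cast
    ring
  rw [e2]
  ring

lemma Lb (hT : T.IsTree) (hn : 0 < n) :
    T.lapMatrix ℝ *ᵥ (distSqMatrix T *ᵥ (fun j => 2 - (T.degree j:ℝ)))
      = fun i => 2*((n:ℝ)-1)*(2-(T.degree i:ℝ)) - 2*(T.degree i:ℝ) := by
  rw [DeltaTau hT hn]
  funext i
  rw [SimpleGraph.lapMatrix_mulVec_apply]
  rw [Finset.sum_sub_distrib, Finset.sum_const, SimpleGraph.card_neighborFinset_eq_degree,
    nsmul_eq_mul, ← Finset.mul_sum, S4 hT hn i]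
  ring

lemma sumdegw (hT : T.IsTree) (hn : 0 < n) :
    ∑ i, (T.degree i:ℝ) * (∑ j, (T.dist i j:ℝ))
      = 2*(∑ i, ∑ j, (T.dist i j:ℝ)) - (n:ℝ)*((n:ℝ)-1) := by
  have h1 : ∀ i : Fin n, (T.degree i:ℝ) * (∑ j, (T.dist i j:ℝ))
      = ∑ j, (T.degree i:ℝ)*(T.dist i j:ℝ) := fun i => Finset.mul_sum _ _ _
  simp_rw [h1]
  rw [Finset.sum_comm]
  have h3 : ∀ j : Fin n, ∑ i, (T.degree i:ℝ)*(T.dist i j:ℝ)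
      = 2*(∑ k, (T.dist j k:ℝ)) - ((n:ℝ)-1) := by
    intro j
    have hcomm : ∀ i : Fin n, (T.dist i j:ℝ) = (T.dist j i:ℝ) := fun i => by
      rw [SimpleGraph.dist_comm]
    simp_rw [hcomm]
    exact P1 hT hn j
  simp_rw [h3]
  rw [Finset.sum_sub_distrib, ← Finset.mul_sum, Finset.sum_const, card_univ, Fintype.card_fin,
    nsmul_eq_mul]

lemma ME (hT : T.IsTree) (hn : 0 < n) :
    (fun j => 2 - (T.degree j:ℝ)) ⬝ᵥ (distSqMatrix T *ᵥ (fun j => 2 - (T.degree j:ℝ)))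
      = 2*((n:ℝ)-1)^2 := by
  rw [DeltaTau hT hn]
  simp only [dotProduct]
  have h1 : ∀ i : Fin n, (2-(T.degree i:ℝ)) * (2*(∑ j, (T.dist i j:ℝ)) - ((n:ℝ)-1))
      = 4*(∑ j, (T.dist i j:ℝ)) - 2*((T.degree i:ℝ)*(∑ j, (T.dist i j:ℝ)))
        - ((n:ℝ)-1)*(2 - (T.degree i:ℝ)) := fun i => by ring
  simp_rw [h1]
  rw [Finset.sum_sub_distrib, Finset.sum_sub_distrib, ← Finset.mul_sum, ← Finset.mul_sum,
    ← Finset.mul_sum, sumdegw hT hn, tau_sum hT hn]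
  ring


lemma lap_ker (hT : T.IsTree) (hn : 0 < n) (x : Fin n → ℝ) :
    T.lapMatrix ℝ *ᵥ x = 0 ↔ ∃ a : ℝ, x = fun _ => a := by
  constructor
  · intro h
    have h2 : ∀ i j : Fin n, T.Reachable i j → x i = x j := by
      rw [← SimpleGraph.lapMatrix_mulVec_eq_zero_iff_forall_reachable]
      · exact h
    refine ⟨x ⟨0, hn⟩, funext fun i => h2 i ⟨0, hn⟩ (hT.isConnected.preconnected i _)⟩
  · rintro ⟨a, rfl⟩
    have : (fun _ : Fin n => a) = a • (fun _ : Fin n => (1:ℝ)) := by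
      funext i; simp
    rw [this, Matrix.mulVec_smul, T.lapMatrix_mulVec_const_eq_zero, smul_zero]

lemma lap_sum (x : Fin n → ℝ) : ∑ i, (T.lapMatrix ℝ *ᵥ x) i = 0 := by
  simp_rw [SimpleGraph.lapMatrix_mulVec_apply]
  rw [Finset.sum_sub_distrib, sum_nbr_swap (T := T) x, sub_self]

lemma lap_symm : (T.lapMatrix ℝ)ᵀ = T.lapMatrix ℝ := T.isSymm_lapMatrix ℝ

lemma dsq_symm : (distSqMatrix T)ᵀ = distSqMatrix T := by
  ext i j
  show ((T.dist j i : ℝ))^2 = ((T.dist i j : ℝ))^2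
  rw [SimpleGraph.dist_comm]

lemma symm_dot (M : Matrix (Fin n) (Fin n) ℝ) (h : Mᵀ = M) (v z : Fin n → ℝ) :
    v ⬝ᵥ (M *ᵥ z) = (M *ᵥ v) ⬝ᵥ z := by
  rw [Matrix.dotProduct_mulVec]
  conv_lhs => rw [← h]
  rw [Matrix.vecMul_transpose]

lemma KER3 (hT : T.IsTree) (hn : 0 < n) (x : Fin n → ℝ) :
    distSqMatrix T *ᵥ x = 0
      ↔ (T.lapMatrix ℝ *ᵥ (distSqMatrix T *ᵥ x) = 0
          ∧ (fun j => 2 - (T.degree j:ℝ)) ⬝ᵥ (distSqMatrix T *ᵥ x) = 0) := by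
  constructor
  · intro h; rw [h]; constructor
    · rw [Matrix.mulVec_zero]
    · rw [dotProduct_zero]
  · rintro ⟨h1, h2⟩
    obtain ⟨a, ha⟩ := (lap_ker hT hn _).1 h1
    rw [ha] at h2 ⊢
    have : (fun j => 2 - (T.degree j:ℝ)) ⬝ᵥ (fun _ => a) = 2 * a := by
      show (∑ j, (2 - (T.degree j:ℝ)) * a) = 2 * a
      rw [← Finset.sum_mul, tau_sum hT hn]
    rw [this] at h2
    have : a = 0 := by linarith
    rw [this]; rfl

lemma kerchar (hT : T.IsTree) (hn : 0 < n) (y : Fin n → ℝ) (c : ℝ) :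
    distSqMatrix T *ᵥ (T.lapMatrix ℝ *ᵥ y + c • (fun j => 2 - (T.degree j:ℝ))) = 0
    ↔ ((∀ i, 4*((T.degree i:ℝ) - 2)*(y i)
            + 2*(∑ j, (2-(T.degree j:ℝ))*(y j))*(2-(T.degree i:ℝ))
            + c * (2*((n:ℝ)-1)*(2-(T.degree i:ℝ)) - 2*(T.degree i:ℝ)) = 0)
        ∧ ((∑ j, (2*((n:ℝ)-1)*(2-(T.degree j:ℝ)) - 2*(T.degree j:ℝ))*(y j))
            + c*(2*((n:ℝ)-1)^2) = 0)) := by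
  rw [KER3 hT hn]
  have hdistrib : distSqMatrix T *ᵥ (T.lapMatrix ℝ *ᵥ y + c • (fun j => 2 - (T.degree j:ℝ)))
      = distSqMatrix T *ᵥ (T.lapMatrix ℝ *ᵥ y) + c • (distSqMatrix T *ᵥ (fun j => 2 - (T.degree j:ℝ))) := by
    rw [Matrix.mulVec_add, Matrix.mulVec_smul]
  rw [hdistrib]
  have hv1 : T.lapMatrix ℝ *ᵥ (distSqMatrix T *ᵥ (T.lapMatrix ℝ *ᵥ y)
        + c • (distSqMatrix T *ᵥ (fun j => 2 - (T.degree j:ℝ))))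
      = (fun i => 4*((T.degree i:ℝ) - 2)*(y i)
            + 2*(∑ j, (2-(T.degree j:ℝ))*(y j))*(2-(T.degree i:ℝ))
            + c * (2*((n:ℝ)-1)*(2-(T.degree i:ℝ)) - 2*(T.degree i:ℝ))) := by
    rw [Matrix.mulVec_add, Matrix.mulVec_smul, Lb hT hn]
    have hLDL : T.lapMatrix ℝ *ᵥ (distSqMatrix T *ᵥ (T.lapMatrix ℝ *ᵥ y))
        = fun i => 4*((T.degree i:ℝ) - 2)*(y i)
            + 2*(∑ j, (2-(T.degree j:ℝ))*(y j))*(2-(T.degree i:ℝ)) := by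
      rw [Matrix.mulVec_mulVec, Matrix.mulVec_mulVec, Matrix.mul_assoc, C2 hT]
      funext i
      show (∑ j, (2*(2-(T.degree i:ℝ))*(2-(T.degree j:ℝ))
          + (if i = j then 4*((T.degree i:ℝ) - 2) else 0)) * y j) = _
      simp_rw [add_mul, ite_mul, zero_mul]
      rw [Finset.sum_add_distrib, Finset.sum_ite_eq univ i _, if_pos (Finset.mem_univ i)]
      have : ∀ j, 2*(2-(T.degree i:ℝ))*(2-(T.degree j:ℝ)) * y j
          = (2*(2-(T.degree i:ℝ))) * ((2-(T.degree j:ℝ)) * y j) := fun j => by ring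
      simp_rw [this]
      rw [← Finset.mul_sum]
      ring
    rw [hLDL]
    funext i
    show _ + c * _ = _
    ring
  have hv2 : (fun j => 2 - (T.degree j:ℝ)) ⬝ᵥ (distSqMatrix T *ᵥ (T.lapMatrix ℝ *ᵥ y)
        + c • (distSqMatrix T *ᵥ (fun j => 2 - (T.degree j:ℝ))))
      = (∑ j, (2*((n:ℝ)-1)*(2-(T.degree j:ℝ)) - 2*(T.degree j:ℝ))*(y j))
            + c*(2*((n:ℝ)-1)^2) := by
    rw [dotProduct_add, dotProduct_smul, ME hT hn]
    have h1 : (fun j => 2 - (T.degree j:ℝ)) ⬝ᵥ (distSqMatrix T *ᵥ (T.lapMatrix ℝ *ᵥ y))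
        = (∑ j, (2*((n:ℝ)-1)*(2-(T.degree j:ℝ)) - 2*(T.degree j:ℝ))*(y j)) := by
      rw [symm_dot _ dsq_symm, symm_dot _ lap_symm, Lb hT hn]
      rfl
    rw [h1, smul_eq_mul]
  rw [hv1, hv2]
  constructor
  · rintro ⟨h1, h2⟩
    exact ⟨fun i => congrFun h1 i, h2⟩
  · rintro ⟨h1, h2⟩
    exact ⟨funext fun i => h1 i, h2⟩


noncomputable def sumF (n : ℕ) : (Fin n → ℝ) →ₗ[ℝ] ℝ where
  toFun x := ∑ i, x i
  map_add' x y := by simp [Finset.sum_add_distrib]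
  map_smul' r x := by simp [Finset.mul_sum]

lemma lap_range (hT : T.IsTree) (hn : 0 < n) :
    LinearMap.range (T.lapMatrix ℝ).mulVecLin = LinearMap.ker (sumF n) := by
  have hle : LinearMap.range (T.lapMatrix ℝ).mulVecLin ≤ LinearMap.ker (sumF n) := by
    rintro z ⟨y, rfl⟩
    simpa [sumF, Matrix.mulVecLin_apply] using lap_sum (T := T) y
  have hker : LinearMap.ker (T.lapMatrix ℝ).mulVecLin
      = Submodule.span ℝ {(fun _ => (1:ℝ) : Fin n → ℝ)} := by
    apply le_antisymm
    · intro x hx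
      rw [LinearMap.mem_ker, Matrix.mulVecLin_apply] at hx
      obtain ⟨a, rfl⟩ := (lap_ker hT hn x).1 hx
      rw [Submodule.mem_span_singleton]
      exact ⟨a, by funext i; simp⟩
    · rw [Submodule.span_le, Set.singleton_subset_iff]
      rw [SetLike.mem_coe, LinearMap.mem_ker, Matrix.mulVecLin_apply]
      exact T.lapMatrix_mulVec_const_eq_zero
  have h1 : Module.finrank ℝ (LinearMap.ker (T.lapMatrix ℝ).mulVecLin) = 1 := by
    rw [hker]
    refine finrank_span_singleton ?_
    intro h
    have := congrFun h ⟨0, hn⟩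
    simpa using this
  have h2 := LinearMap.finrank_range_add_finrank_ker (T.lapMatrix ℝ).mulVecLin
  rw [h1, Module.finrank_fin_fun] at h2
  have hsurj : Function.Surjective (sumF n) := by
    intro r
    refine ⟨fun _ => r / n, ?_⟩
    show (∑ _i : Fin n, r / (n:ℝ)) = r
    rw [Finset.sum_const, card_univ, Fintype.card_fin, nsmul_eq_mul]
    have : (n:ℝ) ≠ 0 := Nat.cast_ne_zero.2 hn.ne'
    field_simp
  have h3 := LinearMap.finrank_range_add_finrank_ker (sumF n)
  rw [LinearMap.range_eq_top.2 hsurj, finrank_top, Module.finrank_self,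
    Module.finrank_fin_fun] at h3
  exact Submodule.eq_of_le_of_finrank_le hle (by omega)

variable (T) in
noncomputable def phi : ((Fin n → ℝ) × ℝ) →ₗ[ℝ] (Fin n → ℝ) :=
  (T.lapMatrix ℝ).mulVecLin.comp (LinearMap.fst ℝ (Fin n → ℝ) ℝ)
    + (LinearMap.snd ℝ (Fin n → ℝ) ℝ).smulRight (fun j => 2 - (T.degree j:ℝ))

lemma phi_apply (y : Fin n → ℝ) (c : ℝ) :
    phi T (y, c) = T.lapMatrix ℝ *ᵥ y + c • (fun j => 2 - (T.degree j:ℝ)) := rfl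

lemma phi_surj (hT : T.IsTree) (hn : 0 < n) : Function.Surjective (phi T) := by
  intro x
  set c := (∑ i, x i) / 2 with hc
  have hz : (x - c • fun j => 2 - (T.degree j:ℝ)) ∈ LinearMap.ker (sumF n) := by
    show (∑ i, (x i - c * (2 - (T.degree i:ℝ)))) = 0
    rw [Finset.sum_sub_distrib, ← Finset.mul_sum, tau_sum hT hn, hc]
    ring
  rw [← lap_range hT hn] at hz
  obtain ⟨y, hy⟩ := hz
  refine ⟨(y, c), ?_⟩
  rw [phi_apply, ← Matrix.mulVecLin_apply, hy]
  abel

lemma finrank_ker_comp {M₁ M₂ M₃ : Type*} [AddCommGroup M₁] [AddCommGroup M₂] [AddCommGroup M₃]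
    [Module ℝ M₁] [Module ℝ M₂] [Module ℝ M₃] [FiniteDimensional ℝ M₁] [FiniteDimensional ℝ M₂]
    (f : M₁ →ₗ[ℝ] M₂) (g : M₂ →ₗ[ℝ] M₃) (hf : Function.Surjective f) :
    Module.finrank ℝ (LinearMap.ker (g ∘ₗ f))
      = Module.finrank ℝ (LinearMap.ker g) + Module.finrank ℝ (LinearMap.ker f) := by
  have h1 := LinearMap.finrank_range_add_finrank_ker (g ∘ₗ f)
  have h2 := LinearMap.finrank_range_add_finrank_ker f
  have h3 := LinearMap.finrank_range_add_finrank_ker g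
  have hr : LinearMap.range (g ∘ₗ f) = LinearMap.range g := by
    rw [LinearMap.range_comp, LinearMap.range_eq_top.2 hf, Submodule.map_top]
  have hrf : Module.finrank ℝ (LinearMap.range f) = Module.finrank ℝ M₂ := by
    rw [LinearMap.range_eq_top.2 hf]
    exact finrank_top ℝ M₂
  rw [hr] at h1
  omega

lemma ker_phi (hT : T.IsTree) (hn : 0 < n) :
    LinearMap.ker (phi T)
      = Submodule.span ℝ {((fun _ => (1:ℝ) : Fin n → ℝ), (0:ℝ))} := by
  apply le_antisymm
  · rintro ⟨y, c⟩ hyc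
    rw [LinearMap.mem_ker] at hyc
    have hsum := congrArg (sumF n) hyc
    rw [map_zero] at hsum
    have hsum2 : (∑ i, ((T.lapMatrix ℝ *ᵥ y) i + c * (2 - (T.degree i:ℝ)))) = 0 := by
      rw [phi_apply] at hsum
      simpa [sumF] using hsum
    rw [Finset.sum_add_distrib, lap_sum, ← Finset.mul_sum, tau_sum hT hn, zero_add] at hsum2
    have hc : c = 0 := by linarith
    subst hc
    have hy : T.lapMatrix ℝ *ᵥ y = 0 := by
      have := hyc
      rw [phi_apply] at this
      simpa using this
    obtain ⟨a, rfl⟩ := (lap_ker hT hn y).1 hy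
    rw [Submodule.mem_span_singleton]
    exact ⟨a, by
      rw [Prod.smul_mk]
      refine Prod.ext ?_ ?_
      · funext i; simp
      · simp⟩
  · rw [Submodule.span_le, Set.singleton_subset_iff, SetLike.mem_coe, LinearMap.mem_ker,
      phi_apply]
    rw [T.lapMatrix_mulVec_const_eq_zero]
    simp

lemma one_zero_ne : ((fun _ => (1:ℝ) : Fin n → ℝ), (0:ℝ)) ≠ 0 ↔ 0 < n := by
  constructor
  · intro h
    by_contra hn
    push_neg at hn
    interval_cases n
    · exact h (by
        refine Prod.ext ?_ ?_
        · funext i; exact absurd i.2 (by omega)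
        · rfl)
  · intro hn h
    have := congrFun (congrArg Prod.fst h) ⟨0, hn⟩
    simpa using this

lemma main_count (hT : T.IsTree) (hn : 0 < n) :
    Module.finrank ℝ (LinearMap.ker ((distSqMatrix T).mulVecLin ∘ₗ phi T))
      = Module.finrank ℝ (LinearMap.ker (distSqMatrix T).mulVecLin) + 1 := by
  rw [finrank_ker_comp (phi T) (distSqMatrix T).mulVecLin (phi_surj hT hn)]
  congr 1
  rw [ker_phi hT hn]
  exact finrank_span_singleton (one_zero_ne.2 hn)


lemma sum_b0 (hT : T.IsTree) (hn : 0 < n) :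
    ∑ j, (2*((n:ℝ)-1)*(2-(T.degree j:ℝ)) - 2*(T.degree j:ℝ)) = 0 := by
  rw [Finset.sum_sub_distrib, ← Finset.mul_sum, tau_sum hT hn, ← Finset.mul_sum,
    handshake hT hn]
  ring

lemma sum_bS (hn : 0 < n) :
    ∑ j ∈ univ.filter (fun v => T.degree v = 2),
        (2*((n:ℝ)-1)*(2-(T.degree j:ℝ)) - 2*(T.degree j:ℝ))
      = -4 * ((univ.filter (fun v => T.degree v = 2)).card : ℝ) := by
  have hconst : ∀ j ∈ univ.filter (fun v : Fin n => T.degree v = 2),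
      (2*((n:ℝ)-1)*(2-(T.degree j:ℝ)) - 2*(T.degree j:ℝ)) = -4 := by
    intro j hj
    have hj2 : (T.degree j:ℝ) = 2 := by exact_mod_cast (Finset.mem_filter.1 hj).2
    rw [hj2]; ring
  rw [Finset.sum_congr rfl hconst, Finset.sum_const, nsmul_eq_mul]
  ring

lemma sum_S_tau_mul (f : Fin n → ℝ) :
    ∑ j ∈ univ.filter (fun v => T.degree v = 2), (2-(T.degree j:ℝ)) * f j = 0 := by
  refine Finset.sum_eq_zero fun j hj => ?_
  have hj2 : T.degree j = 2 := (Finset.mem_filter.1 hj).2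
  rw [hj2]
  norm_num

lemma sum_bS_mul (f : Fin n → ℝ) :
    ∑ j ∈ univ.filter (fun v => T.degree v = 2),
        (2*((n:ℝ)-1)*(2-(T.degree j:ℝ)) - 2*(T.degree j:ℝ)) * f j
      = -4 * ∑ j ∈ univ.filter (fun v => T.degree v = 2), f j := by
  rw [Finset.mul_sum]
  refine Finset.sum_congr rfl fun j hj => ?_
  have hj2 : (T.degree j:ℝ) = 2 := by exact_mod_cast (Finset.mem_filter.1 hj).2
  rw [hj2]; ring

lemma case_t1 (hT : T.IsTree) (hn2 : 2 < n) {v₀ : Fin n} (hv₀ : T.degree v₀ = 2) :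
    Module.finrank ℝ (LinearMap.ker ((distSqMatrix T).mulVecLin ∘ₗ phi T))
      = (univ.filter fun v => T.degree v = 2).card := by
  classical
  have hn0 : 0 < n := by omega
  set S : Finset (Fin n) := univ.filter (fun v => T.degree v = 2) with hSdef
  have htpos : 0 < S.card := Finset.card_pos.2 ⟨v₀, by simp [hSdef, hv₀]⟩
  have htR : ((S.card : ℕ):ℝ) ≠ 0 := Nat.cast_ne_zero.2 htpos.ne'
  have hmem : ∀ (y : Fin n → ℝ) (c : ℝ),
      ((y, c) ∈ LinearMap.ker ((distSqMatrix T).mulVecLin ∘ₗ phi T)) ↔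
      ((∀ i, 4*((T.degree i:ℝ) - 2)*(y i)
            + 2*(∑ j, (2-(T.degree j:ℝ))*(y j))*(2-(T.degree i:ℝ))
            + c * (2*((n:ℝ)-1)*(2-(T.degree i:ℝ)) - 2*(T.degree i:ℝ)) = 0)
        ∧ ((∑ j, (2*((n:ℝ)-1)*(2-(T.degree j:ℝ)) - 2*(T.degree j:ℝ))*(y j))
            + c*(2*((n:ℝ)-1)^2) = 0)) := by
    intro y c
    rw [LinearMap.mem_ker, LinearMap.comp_apply, Matrix.mulVecLin_apply, phi_apply,
      kerchar hT hn0]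
  have hCsum : (∑ j ∈ univ.filter (fun v => ¬ T.degree v = 2),
        (2*((n:ℝ)-1)*(2-(T.degree j:ℝ)) - 2*(T.degree j:ℝ)))
      = 4 * (S.card:ℝ) := by
    have hsplitb := Finset.sum_filter_add_sum_filter_not univ (fun v => T.degree v = 2)
      (fun j => (2*((n:ℝ)-1)*(2-(T.degree j:ℝ)) - 2*(T.degree j:ℝ)))
    rw [sum_b0 hT hn0, sum_bS hn0] at hsplitb
    linarith
  have hstruct : ∀ (y : Fin n → ℝ) (c : ℝ),
      (y, c) ∈ LinearMap.ker ((distSqMatrix T).mulVecLin ∘ₗ phi T) →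
      c = 0 ∧ (∀ i, T.degree i ≠ 2 → y i = (∑ j, (2-(T.degree j:ℝ))*(y j))/2)
        ∧ (∑ j, (2-(T.degree j:ℝ))*(y j)) * (S.card : ℝ) = 2 * ∑ j ∈ S, y j := by
    intro y c hk
    obtain ⟨h1, h2⟩ := (hmem y c).1 hk
    set σ := ∑ j, (2-(T.degree j:ℝ))*(y j) with hσ
    have hd2 : (T.degree v₀ : ℝ) = 2 := by exact_mod_cast hv₀
    have hc : c = 0 := by
      have hh := h1 v₀
      rw [hd2] at hh
      have h0 : (-4)*c = 0 := by linear_combination hh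
      linarith
    subst hc
    have hoff : ∀ i, T.degree i ≠ 2 → y i = σ/2 := by
      intro i hi
      have hne : (T.degree i:ℝ) - 2 ≠ 0 := by
        intro h
        exact hi (by exact_mod_cast sub_eq_zero.1 h)
      have h' : ((T.degree i:ℝ)-2) * (4*(y i) - 2*σ) = 0 := by
        linear_combination (h1 i)
      rcases mul_eq_zero.1 h' with h'' | h''
      · exact absurd h'' hne
      · linarith
    refine ⟨rfl, hoff, ?_⟩
    have h2' : (∑ j, (2*((n:ℝ)-1)*(2-(T.degree j:ℝ)) - 2*(T.degree j:ℝ))*(y j)) = 0 := by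
      linear_combination h2
    have hsplit := Finset.sum_filter_add_sum_filter_not univ (fun v => T.degree v = 2)
      (fun j => (2*((n:ℝ)-1)*(2-(T.degree j:ℝ)) - 2*(T.degree j:ℝ))*(y j))
    rw [sum_bS_mul] at hsplit
    have hCpart : ∑ j ∈ univ.filter (fun v => ¬ T.degree v = 2),
        (2*((n:ℝ)-1)*(2-(T.degree j:ℝ)) - 2*(T.degree j:ℝ))*(y j)
        = (∑ j ∈ univ.filter (fun v => ¬ T.degree v = 2),
            (2*((n:ℝ)-1)*(2-(T.degree j:ℝ)) - 2*(T.degree j:ℝ))) * (σ/2) := by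
      rw [Finset.sum_mul]
      refine Finset.sum_congr rfl fun j hj => ?_
      rw [hoff j (Finset.mem_filter.1 hj).2]
    rw [hCpart, hCsum, h2'] at hsplit
    ring_nf at hsplit ⊢
    linarith
  let K := LinearMap.ker ((distSqMatrix T).mulVecLin ∘ₗ phi T)
  let fw : K →ₗ[ℝ] ({v : Fin n // T.degree v = 2} → ℝ) :=
    { toFun := fun p => fun v => (p : ((Fin n → ℝ) × ℝ)).1 v.1
      map_add' := fun p q => rfl
      map_smul' := fun r p => rfl }
  have hinj : Function.Injective fw := by
    rw [← LinearMap.ker_eq_bot]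
    refine (Submodule.eq_bot_iff _).2 fun p hp => ?_
    obtain ⟨⟨y, c⟩, hk⟩ := p
    rw [LinearMap.mem_ker] at hp
    obtain ⟨hc, hoff, hrel⟩ := hstruct y c hk
    have hyS : ∀ j ∈ S, y j = 0 := by
      intro j hj
      have hj2 : T.degree j = 2 := (Finset.mem_filter.1 hj).2
      exact congrFun hp ⟨j, hj2⟩
    have hSy : ∑ j ∈ S, y j = 0 := Finset.sum_eq_zero hyS
    rw [hSy, mul_zero] at hrel
    have hσ0 : (∑ j, (2-(T.degree j:ℝ))*(y j)) = 0 := by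
      rcases mul_eq_zero.1 hrel with h | h
      · exact h
      · exact absurd h htR
    have hy0 : y = 0 := by
      funext i
      by_cases hi : T.degree i = 2
      · exact hyS i (Finset.mem_filter.2 ⟨Finset.mem_univ i, hi⟩)
      · rw [hoff i hi, hσ0]; norm_num
    exact Subtype.ext (Prod.ext hy0 hc)
  have hτS : ∑ j ∈ univ.filter (fun v => T.degree v = 2), (2-(T.degree j:ℝ)) = 0 := by
    refine Finset.sum_eq_zero fun j hj => ?_
    have hj2 : (T.degree j:ℝ) = 2 := by exact_mod_cast (Finset.mem_filter.1 hj).2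
    rw [hj2]; ring
  have hτC : ∑ j ∈ univ.filter (fun v => ¬ T.degree v = 2), (2-(T.degree j:ℝ)) = 2 := by
    have hτsplit := Finset.sum_filter_add_sum_filter_not univ (fun v => T.degree v = 2)
      (fun j => (2-(T.degree j:ℝ)))
    rw [hτS, tau_sum hT hn0] at hτsplit
    linarith
  have hsurjf : Function.Surjective fw := by
    intro z
    set a := (∑ v : {v : Fin n // T.degree v = 2}, z v) / (S.card : ℝ) with ha
    set y : Fin n → ℝ := fun i => if h : T.degree i = 2 then z ⟨i, h⟩ else a with hy
    have hyoff : ∀ i, ¬ T.degree i = 2 → y i = a := by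
      intro i hi
      rw [hy]
      simp only
      rw [dif_neg hi]
    have hmemS : ∀ x : Fin n, x ∈ S ↔ T.degree x = 2 := by
      intro x; simp [hSdef]
    have hzsum : ∑ j ∈ S, y j = ∑ v : {v : Fin n // T.degree v = 2}, z v := by
      rw [Finset.sum_subtype (p := fun v => T.degree v = 2) S hmemS y]
      refine Finset.sum_congr rfl fun v _ => ?_
      rw [hy]
      simp only
      rw [dif_pos v.2]
    have hσ : (∑ j, (2-(T.degree j:ℝ))*(y j)) = 2*a := by
      rw [← Finset.sum_filter_add_sum_filter_not univ (fun v => T.degree v = 2)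
        (fun j => (2-(T.degree j:ℝ))*(y j))]
      rw [sum_S_tau_mul]
      have hcong : ∀ j ∈ univ.filter (fun v => ¬ T.degree v = 2),
          (2-(T.degree j:ℝ))*(y j) = (2-(T.degree j:ℝ))*a := by
        intro j hj
        rw [hyoff j (Finset.mem_filter.1 hj).2]
      rw [Finset.sum_congr rfl hcong, ← Finset.sum_mul, hτC]
      ring
    have hk : (y, (0:ℝ)) ∈ K := by
      rw [hmem]
      constructor
      · intro i
        by_cases hi : T.degree i = 2
        · have hd : (T.degree i:ℝ) = 2 := by exact_mod_cast hi
          rw [hd]; ring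
        · rw [hσ, hyoff i hi]; ring
      · have hsplit := Finset.sum_filter_add_sum_filter_not univ (fun v => T.degree v = 2)
          (fun j => (2*((n:ℝ)-1)*(2-(T.degree j:ℝ)) - 2*(T.degree j:ℝ))*(y j))
        rw [sum_bS_mul] at hsplit
        have hCpart : ∑ j ∈ univ.filter (fun v => ¬ T.degree v = 2),
            (2*((n:ℝ)-1)*(2-(T.degree j:ℝ)) - 2*(T.degree j:ℝ))*(y j)
            = (∑ j ∈ univ.filter (fun v => ¬ T.degree v = 2),
                (2*((n:ℝ)-1)*(2-(T.degree j:ℝ)) - 2*(T.degree j:ℝ))) * a := by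
          rw [Finset.sum_mul]
          refine Finset.sum_congr rfl fun j hj => ?_
          rw [hyoff j (Finset.mem_filter.1 hj).2]
        rw [hCpart, hCsum, hzsum] at hsplit
        rw [← hsplit, ha]
        field_simp
        ring
    refine ⟨⟨(y, 0), hk⟩, ?_⟩
    funext v
    show y v.1 = z v
    rw [hy]
    simp only
    rw [dif_pos v.2]
  have hfin := LinearEquiv.finrank_eq (LinearEquiv.ofBijective fw ⟨hinj, hsurjf⟩)
  rw [hfin, Module.finrank_fintype_fun_eq_card, Fintype.card_subtype]


lemma sum_e (hT : T.IsTree) (hn : 0 < n) : ∑ i, ((T.degree i:ℝ) - 2) = -2 := by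
  rw [Finset.sum_sub_distrib, handshake hT hn, Finset.sum_const, card_univ, Fintype.card_fin,
    nsmul_eq_mul]
  ring

lemma case_t0 (hT : T.IsTree) (hn2 : 2 < n) (hS : ∀ v : Fin n, T.degree v ≠ 2) :
    Module.finrank ℝ (LinearMap.ker ((distSqMatrix T).mulVecLin ∘ₗ phi T)) = 1 := by
  have hn0 : 0 < n := by omega
  have hn3 : (3:ℝ) ≤ (n:ℝ) := by exact_mod_cast hn2
  have hmem : ∀ (y : Fin n → ℝ) (c : ℝ),
      ((y, c) ∈ LinearMap.ker ((distSqMatrix T).mulVecLin ∘ₗ phi T)) ↔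
      ((∀ i, 4*((T.degree i:ℝ) - 2)*(y i)
            + 2*(∑ j, (2-(T.degree j:ℝ))*(y j))*(2-(T.degree i:ℝ))
            + c * (2*((n:ℝ)-1)*(2-(T.degree i:ℝ)) - 2*(T.degree i:ℝ)) = 0)
        ∧ ((∑ j, (2*((n:ℝ)-1)*(2-(T.degree j:ℝ)) - 2*(T.degree j:ℝ))*(y j))
            + c*(2*((n:ℝ)-1)^2) = 0)) := by
    intro y c
    rw [LinearMap.mem_ker, LinearMap.comp_apply, Matrix.mulVecLin_apply, phi_apply,
      kerchar hT hn0]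
  have he : ∀ i : Fin n, (T.degree i:ℝ) - 2 ≠ 0 := by
    intro i h
    exact hS i (by exact_mod_cast sub_eq_zero.1 h)
  have hterm : ∀ i : Fin n, -1 ≤ 1/((T.degree i:ℝ)-2) := by
    intro i
    rcases lt_or_ge (T.degree i) 2 with h | h
    · have h1 : (T.degree i:ℝ) ≤ 1 := by exact_mod_cast Nat.lt_succ_iff.1 h
      have hneg : ((T.degree i:ℝ)-2) < 0 := by linarith
      rw [le_div_iff_of_neg hneg]
      linarith
    · have h3 : 3 ≤ T.degree i := by
        have := hS i
        omega
      have hpos : 0 < (T.degree i:ℝ)-2 := by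
        have : (3:ℝ) ≤ (T.degree i:ℝ) := by exact_mod_cast h3
        linarith
      have : 0 < 1/((T.degree i:ℝ)-2) := by positivity
      linarith
  have hv0 : ∃ v : Fin n, 3 ≤ T.degree v := by
    by_contra h
    push_neg at h
    have hle : ∀ v : Fin n, (T.degree v:ℝ) ≤ 1 := by
      intro v
      have h1 := h v
      have h2 := hS v
      have : T.degree v ≤ 1 := by omega
      exact_mod_cast this
    have hsum := handshake hT hn0
    have hb : ∑ i, (T.degree i:ℝ) ≤ ∑ _i : Fin n, (1:ℝ) :=
      Finset.sum_le_sum (fun i _ => hle i)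
    rw [Finset.sum_const, card_univ, Fintype.card_fin, nsmul_eq_mul, mul_one, hsum] at hb
    linarith
  obtain ⟨v₁, hv₁⟩ := hv0
  have hHgt : 0 < 2*(n:ℝ) - 1 + 2*(∑ i, 1/((T.degree i:ℝ)-2)) := by
    have hsplit := (Finset.add_sum_erase univ (fun i => 1/((T.degree i:ℝ)-2))
      (Finset.mem_univ v₁)).symm
    have hbound : ∑ _i ∈ univ.erase v₁, (-1:ℝ) ≤ ∑ i ∈ univ.erase v₁, 1/((T.degree i:ℝ)-2) :=
      Finset.sum_le_sum (fun i _ => hterm i)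
    rw [Finset.sum_const, Finset.card_erase_of_mem (Finset.mem_univ v₁), nsmul_eq_mul,
      Finset.card_univ, Fintype.card_fin, Nat.cast_sub hn0, Nat.cast_one] at hbound
    have hpos1 : 0 < 1/((T.degree v₁:ℝ)-2) := by
      have : (3:ℝ) ≤ (T.degree v₁:ℝ) := by exact_mod_cast hv₁
      have : 0 < (T.degree v₁:ℝ)-2 := by linarith
      positivity
    rw [hsplit]
    linarith
  have hker : LinearMap.ker ((distSqMatrix T).mulVecLin ∘ₗ phi T)
      = Submodule.span ℝ {((fun _ => (1:ℝ) : Fin n → ℝ), (0:ℝ))} := by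
    apply le_antisymm
    · rintro ⟨y, c⟩ hk
      obtain ⟨h1, h2⟩ := (hmem y c).1 hk
      set σ := ∑ j, (2-(T.degree j:ℝ))*(y j) with hσdef
      have key_i : ∀ i, 4*(2*((n:ℝ)-1)*(2-(T.degree i:ℝ)) - 2*(T.degree i:ℝ))*(y i)*((T.degree i:ℝ)-2)
          = 2*σ*(2*((n:ℝ)-1)*(2-(T.degree i:ℝ)) - 2*(T.degree i:ℝ))*((T.degree i:ℝ)-2)
            - c*(2*((n:ℝ)-1)*(2-(T.degree i:ℝ)) - 2*(T.degree i:ℝ))^2 := by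
        intro i
        linear_combination (2*((n:ℝ)-1)*(2-(T.degree i:ℝ)) - 2*(T.degree i:ℝ)) * (h1 i)
      have key2 : ∀ i, (2*((n:ℝ)-1)*(2-(T.degree i:ℝ)) - 2*(T.degree i:ℝ))*(y i)
          = σ*(2*((n:ℝ)-1)*(2-(T.degree i:ℝ)) - 2*(T.degree i:ℝ))/2
            - c*((n:ℝ)^2*((T.degree i:ℝ)-2) + 4*(n:ℝ) + 4*(1/((T.degree i:ℝ)-2))) := by
        intro i
        have heF : ((T.degree i:ℝ)-2) * (1/((T.degree i:ℝ)-2)) = 1 :=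
          mul_one_div_cancel (he i)
        linear_combination ((1/((T.degree i:ℝ)-2)) / 4) * key_i i
          - ((2*((n:ℝ)-1)*(2-(T.degree i:ℝ)) - 2*(T.degree i:ℝ))*(y i)
            - σ*(2*((n:ℝ)-1)*(2-(T.degree i:ℝ)) - 2*(T.degree i:ℝ))/2
            + c*(n:ℝ)^2*((T.degree i:ℝ)-2) + 4*c*(n:ℝ)) * heF
      set H := ∑ i : Fin n, 1/((T.degree i:ℝ)-2) with hHdef
      have hsum2 : (∑ j, (2*((n:ℝ)-1)*(2-(T.degree j:ℝ)) - 2*(T.degree j:ℝ))*(y j))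
          = (σ/2)*(∑ j, (2*((n:ℝ)-1)*(2-(T.degree j:ℝ)) - 2*(T.degree j:ℝ)))
            - c*((n:ℝ)^2*(∑ j, ((T.degree j:ℝ)-2)) + (n:ℝ)*(4*(n:ℝ)) + 4*H) := by
        rw [Finset.sum_congr rfl (fun j _ => key2 j)]
        rw [Finset.sum_sub_distrib]
        congr 1
        · have : ∀ j : Fin n, σ*(2*((n:ℝ)-1)*(2-(T.degree j:ℝ)) - 2*(T.degree j:ℝ))/2
              = (σ/2)*(2*((n:ℝ)-1)*(2-(T.degree j:ℝ)) - 2*(T.degree j:ℝ)) := fun j => by ring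
          rw [Finset.sum_congr rfl (fun j _ => this j), ← Finset.mul_sum]
        · rw [← Finset.mul_sum]
          congr 1
          rw [hHdef, Finset.sum_add_distrib, Finset.sum_add_distrib, Finset.sum_const,
            card_univ, Fintype.card_fin, nsmul_eq_mul, ← Finset.mul_sum, ← Finset.mul_sum]
      rw [sum_b0 hT hn0, sum_e hT hn0] at hsum2
      have hc0 : c * (-4*(n:ℝ) + 2 - 4*H) = 0 := by
        linear_combination h2 - hsum2
      have hc : c = 0 := by
        rcases mul_eq_zero.1 hc0 with h | h
        · exact h
        · exfalso
          have : 0 < 2*(n:ℝ) - 1 + 2*H := hHgt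
          linarith
      subst hc
      have hoff : ∀ i, y i = σ/2 := by
        intro i
        have h' : ((T.degree i:ℝ)-2) * (4*(y i) - 2*σ) = 0 := by
          linear_combination (h1 i)
        rcases mul_eq_zero.1 h' with h'' | h''
        · exact absurd h'' (he i)
        · linarith
      rw [Submodule.mem_span_singleton]
      refine ⟨σ/2, ?_⟩
      rw [Prod.smul_mk]
      refine Prod.ext ?_ ?_
      · funext i
        show (σ/2) * 1 = y i
        rw [hoff i]
        ring
      · show (σ/2) * 0 = 0
        ring
    · rw [Submodule.span_le, Set.singleton_subset_iff, SetLike.mem_coe, LinearMap.mem_ker,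
        LinearMap.comp_apply, phi_apply]
      rw [T.lapMatrix_mulVec_const_eq_zero]
      simp
  rw [hker]
  exact finrank_span_singleton (one_zero_ne.2 hn0)



lemma iZero_eq_nullity (hn : 0 < n) :
    iZero (distSqMatrix T) = Module.finrank ℝ (LinearMap.ker (distSqMatrix T).mulVecLin) := by
  have hherm : (distSqMatrix T).IsHermitian := by
    rw [Matrix.IsHermitian, Matrix.conjTranspose_eq_transpose_of_trivial, dsq_symm]
  rw [iZero, dif_pos hherm]
  have hrank := hherm.rank_eq_card_non_zero_eigs
  have hcards := Finset.card_filter_add_card_filter_not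
    (s := (univ : Finset (Fin n))) (p := fun i => hherm.eigenvalues i = 0)
  have hrn := LinearMap.finrank_range_add_finrank_ker (distSqMatrix T).mulVecLin
  rw [Module.finrank_fin_fun] at hrn
  have hrdef : (distSqMatrix T).rank
      = Module.finrank ℝ (LinearMap.range (distSqMatrix T).mulVecLin) := rfl
  have hsub : Fintype.card {i // hherm.eigenvalues i ≠ 0}
      = (univ.filter fun i => ¬ hherm.eigenvalues i = 0).card := Fintype.card_subtype _
  rw [card_univ, Fintype.card_fin] at hcards
  omega


end TreeProof

theorem stmt6 {n : ℕ} (hn : 2 < n)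
    (T : SimpleGraph (Fin n)) [DecidableRel T.Adj] (hT : T.IsTree)
    (t : ℕ) (ht : t = (Finset.univ.filter fun v => T.degree v = 2).card) :
    (2 ≤ t → iZero (distSqMatrix T) = t - 1) ∧
    (t ≤ 1 → iZero (distSqMatrix T) = 0) := by
  have hn0 : 0 < n := by omega
  have hmain := main_count hT hn0
  constructor
  · intro h2t
    have hpos : 0 < (univ.filter fun v => T.degree v = 2).card := by omega
    obtain ⟨v, hv⟩ := Finset.card_pos.1 hpos
    have hcase := case_t1 hT hn (Finset.mem_filter.1 hv).2
    rw [iZero_eq_nullity hn0]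
    omega
  · intro ht1
    rw [iZero_eq_nullity hn0]
    by_cases hex : ∃ v₀ : Fin n, T.degree v₀ = 2
    · obtain ⟨v₀, hv₀⟩ := hex
      have h1 : 0 < (univ.filter fun v => T.degree v = 2).card :=
        Finset.card_pos.2 ⟨v₀, Finset.mem_filter.2 ⟨Finset.mem_univ _, hv₀⟩⟩
      have hcase := case_t1 hT hn hv₀
      omega
    · push_neg at hex
      have hcase := case_t0 hT hn hex
      omega
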